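/- Let r ≥ 8 and suppose n ≥ 2r + 2·log₂ r + log₂ log₂ r + 15 with n ≥ 8r, and let k = ⌊n/2⌋. If m is the least integer with C(m, ⌊m/2⌋) ≥ k, then k ≥ r + m + 1. -/
import Mathlib

lemma aux_pow (s : ℕ) (hs : 4 ≤ s) : s * (4 * s + 2) ≤ 4 ^ s := by
  induction s with
  | zero => omega
  | succ n ih =>
    rcases Nat.lt_or_ge n 4 with h | h
    · have hn3 : n = 3 := by omega
      subst hn3; norm_num
    · have := ih h
      have h4 : 4 ^ (n + 1) = 4 * 4 ^ n := by ring
      nlinarith [this]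

lemma aux_central (s : ℕ) (hs : 4 ≤ s) : 4 * s + 2 ≤ Nat.centralBinom s := by
  have h1 := (Nat.four_pow_lt_mul_centralBinom s hs).le
  have h2 := aux_pow s hs
  have h3 : s * (4 * s + 2) ≤ s * Nat.centralBinom s := le_trans h2 h1
  exact Nat.le_of_mul_le_mul_left h3 (by omega)

theorem stmt_19 (r n k m : ℕ) (hr : 8 ≤ r)
    (hn : (n : ℝ) ≥ 2 * r + 2 * Real.logb 2 r + Real.logb 2 (Real.logb 2 r) + 15)
    (hn8 : 8 * r ≤ n) (hk : k = n / 2)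
    (hge : k ≤ m.choose (m / 2))
    (hleast : ∀ m' : ℕ, k ≤ m'.choose (m' / 2) → m ≤ m') :
    r + m + 1 ≤ k := by
  have hk4 : 4 * r ≤ k := by omega
  set t := k - r - 1 with ht
  have htr : 3 * r - 1 ≤ t := by omega
  set s := t / 2 with hs
  have hs4 : 4 ≤ s := by omega
  have hkt : k ≤ 4 * s + 2 := by omega
  have hc : k ≤ Nat.choose t (t / 2) := by
    calc k ≤ 4 * s + 2 := hkt
    _ ≤ Nat.centralBinom s := aux_central s hs4
    _ = Nat.choose (2 * s) s := rfl
    _ ≤ Nat.choose t s := Nat.choose_le_choose s (by omega)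
    _ = Nat.choose t (t / 2) := rfl
  have hm := hleast t hc
  omega
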